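/- Let ε ∈ (0,1], θ ∈ (0,1], η₁ ∈ (0,1), β ∈ (0,1), H_max > 0, σ_max > 0, and σ ∈ (0, σ_max]. Suppose ‖∇f(x)‖ ≥ ε, the greedy condition ‖∇_I f(x)‖ ≥ θ ‖∇f(x)‖ holds, ‖∇²_I f(x)‖ ≤ H_max, the step s ∈ ℝ^{|I|} satisfies m(s) ≤ m(ŝ), and the acceptance test f(x) − f(x + U_I s) ≥ η₁ (q(0) − q(s)) holds. Then f(x) − f(x + U_I s) ≥ c₁ ε², where c₁ = θ η₁ (1 − β) min{θβ/H_max, √(3θβ/σ_max)}. -/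

import Mathlib

open scoped RealInnerProductSpace

noncomputable section

/-- `U_I`: extension by zero from block coordinates to full coordinates. -/
def blockIncl {n : ℕ} (I : Finset (Fin n)) :
    EuclideanSpace ℝ ↥I →ₗ[ℝ] EuclideanSpace ℝ (Fin n) where
  toFun s := WithLp.toLp 2 (fun i => if h : i ∈ I then s ⟨i, h⟩ else 0)
  map_add' s t := by ext i; by_cases h : i ∈ I <;> simp [h]
  map_smul' c s := by ext i; by_cases h : i ∈ I <;> simp [h]

/-- `U_Iᵀ`: restriction of a vector to the block coordinates. -/
def blockRestr {n : ℕ} (I : Finset (Fin n)) :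
    EuclideanSpace ℝ (Fin n) →ₗ[ℝ] EuclideanSpace ℝ ↥I where
  toFun x := WithLp.toLp 2 (fun i => x i)
  map_add' x y := by ext i; simp
  map_smul' c x := by ext i; simp

/-- Block Hessian `U_Iᵀ H U_I` as a continuous linear map. -/
def blockHess {n : ℕ} (I : Finset (Fin n))
    (H : EuclideanSpace ℝ (Fin n) →L[ℝ] EuclideanSpace ℝ (Fin n)) :
    EuclideanSpace ℝ ↥I →L[ℝ] EuclideanSpace ℝ ↥I :=
  LinearMap.toContinuousLinearMap
    ((blockRestr I) ∘ₗ ((H : EuclideanSpace ℝ (Fin n) →ₗ[ℝ] EuclideanSpace ℝ (Fin n)) ∘ₗ blockIncl I))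

/-- Quadratic model `q(s) = f₀ + gᵀs + (1/2) sᵀ H s`. -/
def quadModel {E : Type*} [NormedAddCommGroup E] [InnerProductSpace ℝ E]
    (f₀ : ℝ) (g : E) (H : E →L[ℝ] E) (s : E) : ℝ :=
  f₀ + ⟪g, s⟫ + (1 / 2) * ⟪s, H s⟫

/-- Cubic model `m(s) = q(s) + (σ/6) ‖s‖³`. -/
def cubicModel {E : Type*} [NormedAddCommGroup E] [InnerProductSpace ℝ E]
    (f₀ : ℝ) (g : E) (H : E →L[ℝ] E) (σ : ℝ) (s : E) : ℝ :=
  quadModel f₀ g H s + σ / 6 * ‖s‖ ^ 3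

/-- Gradient of the cubic model: `∇m(s) = g + H s + (σ/2) ‖s‖ s`. -/
def cubicModelGrad {E : Type*} [NormedAddCommGroup E] [InnerProductSpace ℝ E]
    (g : E) (H : E →L[ℝ] E) (σ : ℝ) (s : E) : E :=
  g + H s + (σ / 2 * ‖s‖) • s

/-- The stepsize `α̂ = min{β/‖H‖, √(3β/(σ‖g‖))}`, the first argument being `+∞` if `H = 0`. -/
def alphaHat {E : Type*} [NormedAddCommGroup E] [InnerProductSpace ℝ E]
    (β σ : ℝ) (g : E) (H : E →L[ℝ] E) : ℝ :=
  haveI := Classical.dec (H = 0)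
  if H = 0 then Real.sqrt (3 * β / (σ * ‖g‖))
  else min (β / ‖H‖) (Real.sqrt (3 * β / (σ * ‖g‖)))

/-- The Cauchy-like point `ŝ = -α̂ g`. -/
def sHat {E : Type*} [NormedAddCommGroup E] [InnerProductSpace ℝ E]
    (β σ : ℝ) (g : E) (H : E →L[ℝ] E) : E :=
  -(alphaHat β σ g H) • g

set_option maxHeartbeats 1000000 in
set_option synthInstance.maxHeartbeats 400000 in
theorem stmt12 (n : ℕ) (hn : 0 < n)
    (f : EuclideanSpace ℝ (Fin n) → ℝ)
    (gradf : EuclideanSpace ℝ (Fin n) → EuclideanSpace ℝ (Fin n))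
    (hessf : EuclideanSpace ℝ (Fin n) → (EuclideanSpace ℝ (Fin n) →L[ℝ] EuclideanSpace ℝ (Fin n)))
    (hf : ContDiff ℝ 2 f)
    (hgradf : ∀ x, HasGradientAt f (gradf x) x)
    (hhessf : ∀ x, HasFDerivAt gradf (hessf x) x)
    (x : EuclideanSpace ℝ (Fin n)) (I : Finset (Fin n))
    (hg : blockRestr I (gradf x) ≠ 0)
    (ε θ η₁ β Hmax σmax σ : ℝ)
    (hε0 : 0 < ε) (hε1 : ε ≤ 1) (hθ0 : 0 < θ) (hθ1 : θ ≤ 1)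
    (hη₁0 : 0 < η₁) (hη₁1 : η₁ < 1) (hβ0 : 0 < β) (hβ1 : β < 1)
    (hHmax : 0 < Hmax) (hσmax : 0 < σmax) (hσ0 : 0 < σ) (hσ1 : σ ≤ σmax)
    (hgε : ε ≤ ‖gradf x‖)
    (hgreedy : θ * ‖gradf x‖ ≤ ‖blockRestr I (gradf x)‖)
    (hHb : ‖blockHess I (hessf x)‖ ≤ Hmax)
    (s : EuclideanSpace ℝ ↥I)
    (hs : cubicModel (f x) (blockRestr I (gradf x)) (blockHess I (hessf x)) σ s ≤
      cubicModel (f x) (blockRestr I (gradf x)) (blockHess I (hessf x)) σ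
        (sHat β σ (blockRestr I (gradf x)) (blockHess I (hessf x))))
    (hacc : η₁ * (quadModel (f x) (blockRestr I (gradf x)) (blockHess I (hessf x)) 0 -
        quadModel (f x) (blockRestr I (gradf x)) (blockHess I (hessf x)) s) ≤
      f x - f (x + blockIncl I s)) :
    θ * η₁ * (1 - β) * min (θ * β / Hmax) (Real.sqrt (3 * θ * β / σmax)) * ε ^ 2 ≤
      f x - f (x + blockIncl I s) := by
  classical
  set g := blockRestr I (gradf x) with hgdef
  set H := blockHess I (hessf x) with hHdef
  set α := alphaHat β σ g H with hαdef
  have hgn : 0 < ‖g‖ := norm_pos_iff.mpr hg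
  have hge : θ * ε ≤ ‖g‖ :=
    le_trans (by nlinarith [hθ0.le, hgε]) hgreedy
  have hsq0 : 0 < 3 * β / (σ * ‖g‖) := by positivity
  have hbpos : 0 < Real.sqrt (3 * β / (σ * ‖g‖)) := Real.sqrt_pos.mpr hsq0
  have hα_le_sqrt : α ≤ Real.sqrt (3 * β / (σ * ‖g‖)) := by
    rw [hαdef, alphaHat]
    split_ifs with h
    · exact le_rfl
    · exact min_le_right _ _
  have hα_pos : 0 < α := by
    rw [hαdef, alphaHat]
    split_ifs with h
    · exact hbpos
    · exact lt_min (div_pos hβ0 (norm_pos_iff.mpr h)) hbpos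
  have hαH : α * ‖H‖ ≤ β := by
    rw [hαdef, alphaHat]
    split_ifs with h
    · simp [h, hβ0.le]
    · have hH0 : 0 < ‖H‖ := norm_pos_iff.mpr h
      have h1 := min_le_left (β / ‖H‖) (Real.sqrt (3 * β / (σ * ‖g‖)))
      calc min (β / ‖H‖) (Real.sqrt (3 * β / (σ * ‖g‖))) * ‖H‖
          ≤ (β / ‖H‖) * ‖H‖ := mul_le_mul_of_nonneg_right h1 hH0.le
        _ = β := div_mul_cancel₀ β hH0.ne'
  have hα_lb : min (β / Hmax) (Real.sqrt (3 * β / (σ * ‖g‖))) ≤ α := by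
    rw [hαdef, alphaHat]
    split_ifs with h
    · exact min_le_right _ _
    · have hH0 : 0 < ‖H‖ := norm_pos_iff.mpr h
      exact min_le_min (by gcongr) le_rfl
  have hq0 : quadModel (f x) g H 0 = f x := by
    simp [quadModel]
  have hnorm_sHat : ‖sHat β σ g H‖ = α * ‖g‖ := by
    rw [sHat, ← hαdef, norm_smul, Real.norm_eq_abs, abs_neg, abs_of_pos hα_pos]
  have hmsHat : cubicModel (f x) g H σ (sHat β σ g H)
      = f x - α * ‖g‖ ^ 2 + α ^ 2 / 2 * ⟪g, H g⟫ + σ / 6 * (α * ‖g‖) ^ 3 := by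
    rw [cubicModel, hnorm_sHat, quadModel, sHat, ← hαdef, map_smul,
      real_inner_smul_right, real_inner_smul_left, real_inner_smul_right,
      real_inner_self_eq_norm_sq]
    ring
  have hCS : ⟪g, H g⟫ ≤ ‖H‖ * ‖g‖ ^ 2 := by
    calc ⟪g, H g⟫ ≤ ‖g‖ * ‖H g‖ := real_inner_le_norm g (H g)
      _ ≤ ‖g‖ * (‖H‖ * ‖g‖) := by
          have := H.le_opNorm g
          nlinarith [hgn.le]
      _ = ‖H‖ * ‖g‖ ^ 2 := by ring
  have hσα : σ * α ^ 2 * ‖g‖ ≤ 3 * β := by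
    have h2 : α ^ 2 ≤ 3 * β / (σ * ‖g‖) := by
      calc α ^ 2 ≤ Real.sqrt (3 * β / (σ * ‖g‖)) ^ 2 :=
            pow_le_pow_left₀ hα_pos.le hα_le_sqrt 2
        _ = 3 * β / (σ * ‖g‖) := Real.sq_sqrt hsq0.le
    have h2' : α ^ 2 * (σ * ‖g‖) ≤ 3 * β := by
      rw [← le_div_iff₀ (by positivity)]
      exact h2
    calc σ * α ^ 2 * ‖g‖ = α ^ 2 * (σ * ‖g‖) := by ring
      _ ≤ 3 * β := h2'
  have hkey : α * (1 - β) * ‖g‖ ^ 2 ≤ f x - quadModel (f x) g H s := by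
    have h1 : quadModel (f x) g H s ≤ cubicModel (f x) g H σ s := by
      rw [cubicModel]
      have : (0:ℝ) ≤ σ / 6 * ‖s‖ ^ 3 := by positivity
      linarith
    have h2 := le_trans h1 hs
    rw [hmsHat] at h2
    have h3 : α ^ 2 / 2 * ⟪g, H g⟫ ≤ α ^ 2 / 2 * (‖H‖ * ‖g‖ ^ 2) := by
      have : (0:ℝ) ≤ α ^ 2 / 2 := by positivity
      nlinarith [hCS]
    have h4 : α * ‖H‖ * (α * ‖g‖ ^ 2) ≤ β * (α * ‖g‖ ^ 2) :=
      mul_le_mul_of_nonneg_right hαH (by positivity)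
    have h5 : (σ * α ^ 2 * ‖g‖) * (α * ‖g‖ ^ 2) ≤ (3 * β) * (α * ‖g‖ ^ 2) :=
      mul_le_mul_of_nonneg_right hσα (by positivity)
    linarith [h2, h3, h4, h5]
  have hA : θ * (θ * β / Hmax) * ε ^ 2 ≤ (β / Hmax) * ‖g‖ ^ 2 := by
    have h2 : (θ * ε) ^ 2 ≤ ‖g‖ ^ 2 := pow_le_pow_left₀ (by positivity) hge 2
    have hb : (0:ℝ) ≤ β / Hmax := by positivity
    calc θ * (θ * β / Hmax) * ε ^ 2 = (β / Hmax) * (θ * ε) ^ 2 := by ring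
      _ ≤ (β / Hmax) * ‖g‖ ^ 2 := mul_le_mul_of_nonneg_left h2 hb
  have hB : θ * Real.sqrt (3 * θ * β / σmax) * ε ^ 2
      ≤ Real.sqrt (3 * β / (σ * ‖g‖)) * ‖g‖ ^ 2 := by
    have e1 : θ * Real.sqrt (3 * θ * β / σmax) * ε ^ 2
        = Real.sqrt (θ ^ 2 * (3 * θ * β / σmax) * ε ^ 4) := by
      rw [Real.sqrt_mul (by positivity), Real.sqrt_mul (by positivity),
        Real.sqrt_sq hθ0.le,
        show ε ^ 4 = (ε ^ 2) ^ 2 by ring, Real.sqrt_sq (by positivity)]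
    have e2 : Real.sqrt (3 * β / (σ * ‖g‖)) * ‖g‖ ^ 2
        = Real.sqrt ((3 * β / (σ * ‖g‖)) * ‖g‖ ^ 4) := by
      rw [Real.sqrt_mul (by positivity), show ‖g‖ ^ 4 = (‖g‖ ^ 2) ^ 2 by ring,
        Real.sqrt_sq (by positivity)]
    rw [e1, e2]
    apply Real.sqrt_le_sqrt
    have hne : ‖g‖ ≠ 0 := hgn.ne'
    rw [show (3 * β / (σ * ‖g‖)) * ‖g‖ ^ 4 = 3 * β * ‖g‖ ^ 3 / σ by
        field_simp]
    rw [show θ ^ 2 * (3 * θ * β / σmax) * ε ^ 4 = 3 * θ ^ 3 * β * ε ^ 4 / σmax by ring]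
    rw [div_le_div_iff₀ hσmax hσ0]
    have h3 : θ ^ 3 * ε ^ 3 ≤ ‖g‖ ^ 3 := by
      calc θ ^ 3 * ε ^ 3 = (θ * ε) ^ 3 := by ring
        _ ≤ ‖g‖ ^ 3 := pow_le_pow_left₀ (by positivity) hge 3
    have h43 : ε ^ 4 ≤ ε ^ 3 := pow_le_pow_of_le_one hε0.le hε1 (by norm_num)
    have h6 : θ ^ 3 * ε ^ 3 * σ ≤ ‖g‖ ^ 3 * σmax :=
      mul_le_mul h3 hσ1 hσ0.le (by positivity)
    have h7 : θ ^ 3 * σ * ε ^ 4 ≤ θ ^ 3 * σ * ε ^ 3 :=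
      mul_le_mul_of_nonneg_left h43 (by positivity)
    have h8 : β * (θ ^ 3 * σ * ε ^ 4) ≤ β * (θ ^ 3 * σ * ε ^ 3) :=
      mul_le_mul_of_nonneg_left h7 hβ0.le
    have h9 : β * (θ ^ 3 * ε ^ 3 * σ) ≤ β * (‖g‖ ^ 3 * σmax) :=
      mul_le_mul_of_nonneg_left h6 hβ0.le
    linarith [h8, h9]
  have hαg : θ * min (θ * β / Hmax) (Real.sqrt (3 * θ * β / σmax)) * ε ^ 2
      ≤ α * ‖g‖ ^ 2 := by
    calc θ * min (θ * β / Hmax) (Real.sqrt (3 * θ * β / σmax)) * ε ^ 2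
        ≤ min ((β / Hmax) * ‖g‖ ^ 2) (Real.sqrt (3 * β / (σ * ‖g‖)) * ‖g‖ ^ 2) := by
          apply le_min
          · calc θ * min (θ * β / Hmax) (Real.sqrt (3 * θ * β / σmax)) * ε ^ 2
                ≤ θ * (θ * β / Hmax) * ε ^ 2 := by
                  gcongr
                  exact min_le_left _ _
              _ ≤ _ := hA
          · calc θ * min (θ * β / Hmax) (Real.sqrt (3 * θ * β / σmax)) * ε ^ 2
                ≤ θ * Real.sqrt (3 * θ * β / σmax) * ε ^ 2 := by
                  gcongr
                  exact min_le_right _ _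
              _ ≤ _ := hB
      _ = min (β / Hmax) (Real.sqrt (3 * β / (σ * ‖g‖))) * ‖g‖ ^ 2 :=
          (min_mul_of_nonneg _ _ (by positivity)).symm
      _ ≤ α * ‖g‖ ^ 2 := mul_le_mul_of_nonneg_right hα_lb (by positivity)
  have h1β : (0:ℝ) ≤ 1 - β := by linarith
  calc θ * η₁ * (1 - β) * min (θ * β / Hmax) (Real.sqrt (3 * θ * β / σmax)) * ε ^ 2
      = η₁ * ((1 - β) * (θ * min (θ * β / Hmax) (Real.sqrt (3 * θ * β / σmax)) * ε ^ 2)) := by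
        ring
    _ ≤ η₁ * ((1 - β) * (α * ‖g‖ ^ 2)) := by gcongr
    _ = η₁ * (α * (1 - β) * ‖g‖ ^ 2) := by ring
    _ ≤ η₁ * (f x - quadModel (f x) g H s) := by gcongr
    _ = η₁ * (quadModel (f x) g H 0 - quadModel (f x) g H s) := by rw [hq0]
    _ ≤ f x - f (x + blockIncl I s) := hacc


end
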